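/- arXiv:math/0611434 — 4 statements merged into one kernel-verified Lean document; each statement's English description precedes it below -/
import Mathlib

section
/- If H is an abelian subgroup of the group of orientation-preserving homeomorphisms of S¹, then the rotation number map Rot: H → ℝ/ℤ is a group homomorphism. -/
noncomputable section

/-- The circle `S¹ = ℝ/ℤ`. -/
abbrev S1 := AddCircle (1 : ℝ)
/-- The group of self-homeomorphisms of a topological space, under composition. -/
instance homeoGroup {X : Type*} [TopologicalSpace X] : Group (Homeomorph X X) where
  mul f g := g.trans f
  one := Homeomorph.refl X
  inv f := f.symm
  mul_assoc _ _ _ := rfl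
  one_mul f := Homeomorph.ext fun _ => rfl
  mul_one f := Homeomorph.ext fun _ => rfl
  inv_mul_cancel f := Homeomorph.ext fun x => f.symm_apply_apply x

/-- `F` is a lift of the circle homeomorphism `f`. -/
def IsLiftOf (f : Homeomorph S1 S1) (F : CircleDeg1Lift) : Prop :=
  ∀ x : ℝ, f ((x : ℝ) : S1) = ((F x : ℝ) : S1)

open scoped Classical

/-- The Poincaré rotation number of a circle homeomorphism, as an element of `ℝ mod 1`,
defined via the translation number of a chosen degree-one lift. -/
noncomputable def Rot (f : Homeomorph S1 S1) : S1 :=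
  if h : ∃ F : CircleDeg1Lift, IsLiftOf f F
  then ((h.choose.translationNumber : ℝ) : S1) else 0

/- Auxiliary lemmas -/

lemma coeS1_eq_iff (x y : ℝ) : (x : S1) = (y : S1) ↔ ∃ n : ℤ, x = y + n := by
  constructor
  · intro h
    have h2 : ((x - y : ℝ) : S1) = 0 := by rw [AddCircle.coe_sub, h, sub_self]
    rw [AddCircle.coe_eq_zero_iff] at h2
    obtain ⟨n, hn⟩ := h2
    exact ⟨n, by simp at hn; linarith⟩
  · rintro ⟨n, rfl⟩
    rw [AddCircle.coe_add, show (((n:ℝ)) : S1) = 0 from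
      (AddCircle.coe_eq_zero_iff _).2 ⟨n, by simp⟩, add_zero]

/-- Two points at distance strictly between 0 and 1 have distinct images in `S1`. -/
lemma coeS1_ne {x y : ℝ} (h1 : x < y) (h2 : y < x + 1) : (x : S1) ≠ (y : S1) := by
  intro h
  obtain ⟨n, hn⟩ := (coeS1_eq_iff _ _).1 h
  have hn0 : (n : ℝ) < 0 := by linarith
  have hn1 : (-1 : ℝ) < n := by linarith
  have : (-1 : ℤ) < n := by exact_mod_cast hn1
  have : n < 0 := by exact_mod_cast hn0
  omega

/-- Two lifts of the same circle homeomorphism differ by a constant integer. -/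
lemma lift_diff_const (f : Homeomorph S1 S1) {L M : CircleDeg1Lift}
    (hL : IsLiftOf f L) (hM : IsLiftOf f M) : ∃ n : ℤ, ∀ x, L x = M x + n := by
  have key : ∀ x : ℝ, ∃ n : ℤ, L x = M x + n := fun x =>
    (coeS1_eq_iff _ _).1 ((hL x).symm.trans (hM x))
  -- two-point lemma
  have two : ∀ (x y : ℝ) (a b : ℤ), L x = M x + a → L y = M y + b →
      x < y → y < x + 1 → a = b := by
    intro x y a b hx hy hxy hyx
    by_contra hne
    rcases lt_or_gt_of_ne hne with hab | hab
    · -- a < b, so (b:ℝ) ≥ a + 1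
      have hb : (a : ℝ) + 1 ≤ (b : ℝ) := by exact_mod_cast hab
      have hMxy : M x ≤ M y := M.monotone hxy.le
      have hLy : L y ≤ L x + 1 := by
        calc L y ≤ L (x + 1) := L.monotone hyx.le
        _ = L x + 1 := L.map_add_one x
      -- M y = M x
      have hMeq : M y = M x := by linarith [hx, hy]
      have : f (x : S1) = f (y : S1) := by
        rw [hM x, hM y, hMeq]
      exact coeS1_ne hxy hyx (f.injective this)
    · -- b < a
      have hb : (b : ℝ) + 1 ≤ (a : ℝ) := by exact_mod_cast hab
      have hLxy : L x ≤ L y := L.monotone hxy.le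
      have hMy : M y ≤ M x + 1 := by
        calc M y ≤ M (x + 1) := M.monotone hyx.le
        _ = M x + 1 := M.map_add_one x
      have hLeq : L y = L x := by linarith [hx, hy]
      have : f (x : S1) = f (y : S1) := by
        rw [hL x, hL y, hLeq]
      exact coeS1_ne hxy hyx (f.injective this)
  obtain ⟨n₀, hn₀⟩ := key 0
  refine ⟨n₀, fun x => ?_⟩
  obtain ⟨n, hn⟩ := key x
  suffices hsuff : n = n₀ by rw [hn, hsuff]
  -- move x to its fractional part
  have hfr : L (Int.fract x) = M (Int.fract x) + n := by
    have hx : x = Int.fract x + (⌊x⌋ : ℤ) := by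
      rw [Int.fract]; ring
    have h1 : L (Int.fract x) + (⌊x⌋ : ℝ) = M (Int.fract x) + (⌊x⌋ : ℝ) + n := by
      rw [← L.map_add_int, ← hx, hn]
      rw [show M (Int.fract x) + (⌊x⌋:ℝ) = M (Int.fract x + ⌊x⌋) from (M.map_add_int _ _).symm, ← hx]
    linarith
  rcases eq_or_lt_of_le (Int.fract_nonneg x) with h0 | h0
  · -- fract x = 0
    rw [← h0] at hfr
    have : (n : ℝ) = n₀ := by linarith [hn₀, hfr]
    exact_mod_cast this
  · exact (two 0 (Int.fract x) n₀ n (by simpa using hn₀) hfr h0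
      (by simpa using Int.fract_lt_one x)).symm

open CircleDeg1Lift in
/-- The rotation number can be computed from any lift. -/
lemma rot_eq_of_lift {f : Homeomorph S1 S1} {F : CircleDeg1Lift} (hF : IsLiftOf f F) :
    Rot f = ((F.translationNumber : ℝ) : S1) := by
  have h : ∃ G : CircleDeg1Lift, IsLiftOf f G := ⟨F, hF⟩
  rw [Rot, dif_pos h]
  obtain ⟨n, hn⟩ := lift_diff_const f h.choose_spec hF
  have hEq : h.choose = (translate (Multiplicative.ofAdd (n : ℝ)) : CircleDeg1Liftˣ) * F := by
    ext x
    simp [CircleDeg1Lift.translate_apply, hn x, add_comm]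
  have hcomm : Commute ((translate (Multiplicative.ofAdd (n : ℝ)) : CircleDeg1Liftˣ) : CircleDeg1Lift) F := by
    ext x
    simp [CircleDeg1Lift.translate_apply, F.map_int_add]
  rw [hEq, translationNumber_mul_of_commute hcomm, translationNumber_translate,
    AddCircle.coe_add, show (((n:ℝ)) : S1) = 0 from (AddCircle.coe_eq_zero_iff _).2 ⟨n, by simp⟩,
    zero_add]

open CircleDeg1Lift in
/-- If `H` is an abelian subgroup of the group of orientation-preserving
homeomorphisms of `S¹` (i.e. each element admits a degree-one lift), then the
rotation number map is a homomorphism `H → ℝ mod 1`. -/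
theorem rotation_number_hom_on_abelian (H : Subgroup (Homeomorph S1 S1))
    (hop : ∀ f ∈ H, ∃ F : CircleDeg1Lift, IsLiftOf f F)
    (hab : ∀ f ∈ H, ∀ g ∈ H, f * g = g * f) :
    ∀ f ∈ H, ∀ g ∈ H, Rot (f * g) = Rot f + Rot g := by
  intro f hf g hg
  obtain ⟨F, hF⟩ := hop f hf
  obtain ⟨G, hG⟩ := hop g hg
  have hFG : IsLiftOf (f * g) (F * G) := by
    intro x
    show f (g ((x:ℝ):S1)) = _
    rw [hG x, hF (G x)]
    rfl
  have hGF : IsLiftOf (f * g) (G * F) := by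
    rw [hab f hf g hg]
    intro x
    show g (f ((x:ℝ):S1)) = _
    rw [hF x, hG (F x)]
    rfl
  obtain ⟨n, hn⟩ := lift_diff_const (f * g) hFG hGF
  -- show n = 0 using semiconjugacy
  set T : CircleDeg1Lift := ((translate (Multiplicative.ofAdd (n : ℝ)) : CircleDeg1Liftˣ) : CircleDeg1Lift) with hT
  have hsem : Function.Semiconj (⇑F) (⇑G) (⇑(T * G)) := by
    intro x
    have := hn x
    simp only [CircleDeg1Lift.mul_apply] at this ⊢
    rw [this, hT, CircleDeg1Lift.translate_apply, add_comm]
  have hτ : translationNumber G = translationNumber (T * G) :=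
    translationNumber_eq_of_semiconj hsem
  have hcomm : Commute T G := by
    ext x
    simp [hT, CircleDeg1Lift.translate_apply, G.map_int_add]
  rw [translationNumber_mul_of_commute hcomm, hT, translationNumber_translate] at hτ
  have hn0 : (n : ℝ) = 0 := by linarith
  have hFGc : Commute F G := by
    ext x
    have := hn x
    simp only [CircleDeg1Lift.mul_apply] at this ⊢
    rw [this, hn0, add_zero]
  rw [rot_eq_of_lift hFG, rot_eq_of_lift hF, rot_eq_of_lift hG,
    translationNumber_mul_of_commute hFGc, AddCircle.coe_add]
end
end

section
/- Let f and g be orientation-preserving homeomorphisms of S¹ each with nonempty fixed point set, such that Fix(f) ⊆ Supp(g) and Fix(g) ⊆ Supp(f). Then ⟨f, g⟩ contains a free subgroup of rank 2. -/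
set_option maxHeartbeats 1000000

noncomputable section

/-- A circle homeomorphism is orientation preserving if it admits a continuous
strictly monotone lift `F : ℝ → ℝ` commuting with the unit translation. -/
def IsOrientationPreserving (f : Homeomorph S1 S1) : Prop :=
  ∃ F : ℝ → ℝ, Continuous F ∧ StrictMono F ∧ (∀ x : ℝ, F (x + 1) = F x + 1) ∧
    ∀ x : ℝ, f (x : S1) = ((F x : ℝ) : S1)

/-- The support of a self-homeomorphism: the set of points it moves. -/
def Supp (f : Homeomorph S1 S1) : Set S1 := {x | f x ≠ x}

/-- The fixed-point set of a self-homeomorphism. -/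
def FixSet (f : Homeomorph S1 S1) : Set S1 := {x | f x = x}

open Filter Topology Pointwise

/- ### Auxiliary group-theory lemmas -/

private lemma smul_cancel_aux {G S : Type*} [Group G] [MulAction G S] (a : G) (k m : ℕ) (y : S) :
    a ^ (k + m) • (a⁻¹ ^ m • y) = a ^ k • y := by
  rw [smul_smul, inv_pow, pow_add, mul_assoc, mul_inv_cancel, mul_one]

lemma pingpong_sets {G S : Type*} [Group G] [MulAction G S] (a : G) (U : Set S)
    (p : S) (hp : p ∈ U) (hpa : a • p = p)
    (h : ∀ m : ℕ, 1 ≤ m → ∀ x ∉ U, a ^ m • x ∈ U ∧ a⁻¹ ^ m • x ∈ U) :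
    ∃ X Y : Set S, X.Nonempty ∧ Disjoint X Y ∧ X ⊆ U ∧ Y ⊆ U ∧
      a • Yᶜ ⊆ X ∧ a⁻¹ • Xᶜ ⊆ Y := by
  classical
  have aux2 : ∀ (k m : ℕ) (y : S), a⁻¹ ^ (k + m) • (a ^ m • y) = a⁻¹ ^ k • y := by
    intro k m y
    have := smul_cancel_aux a⁻¹ k m y
    rwa [inv_inv] at this
  set X : Set S := {x | ∀ n : ℕ, a ^ n • x ∈ U} with hX
  set B : Set S := {x | x ∈ U ∧ ∀ n : ℕ, 1 ≤ n → a⁻¹ ^ n • x ∈ U} with hB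
  refine ⟨X, B \ X, ⟨p, fun n => ?_⟩, Set.disjoint_sdiff_right,
    fun x hx => by simpa using hx 0, fun x hx => hx.1.1, ?_, ?_⟩
  · have : a ^ n • p = p := by
      induction n with
      | zero => simp
      | succ k ih => rw [pow_succ, mul_smul, hpa, ih]
    rw [this]; exact hp
  · rintro _ ⟨y, hy, rfl⟩ n
    simp only [Set.mem_compl_iff, Set.mem_diff, not_and, not_not] at hy
    have key : a ^ (n + 1) • y ∈ U := by
      by_cases hyU : y ∈ U
      · by_cases hyX : y ∈ X
        · exact hyX (n + 1)
        · have hyB : ¬ (∀ n : ℕ, 1 ≤ n → a⁻¹ ^ n • y ∈ U) := fun hb => hyX (hy ⟨hyU, hb⟩)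
          push_neg at hyB
          obtain ⟨m, hm1, hmU⟩ := hyB
          have hz : a ^ (n + 1) • y = a ^ (n + 1 + m) • (a⁻¹ ^ m • y) :=
            (smul_cancel_aux a (n + 1) m y).symm
          rw [hz]
          exact (h (n + 1 + m) (by omega) _ hmU).1
      · exact (h (n + 1) (by omega) y hyU).1
    have hs : a ^ n • a • y = a ^ (n + 1) • y := by rw [smul_smul, ← pow_succ]
    rw [hs]; exact key
  · rintro _ ⟨x, hx, rfl⟩
    simp only [Set.mem_compl_iff, hX, Set.mem_setOf_eq, not_forall] at hx
    obtain ⟨n₀, hn₀⟩ := hx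
    have hmem : ∀ k : ℕ, 1 ≤ k → a⁻¹ ^ k • x ∈ U := by
      intro k hk
      have : a⁻¹ ^ k • x = a⁻¹ ^ (k + n₀) • (a ^ n₀ • x) := (aux2 k n₀ x).symm
      rw [this]
      exact (h (k + n₀) (by omega) _ hn₀).2
    constructor
    · refine ⟨?_, fun m hm => ?_⟩
      · have h1 : a⁻¹ ^ 1 • x ∈ U := hmem 1 le_rfl
        rwa [pow_one] at h1
      · have : a⁻¹ ^ m • a⁻¹ • x = a⁻¹ ^ (m + 1) • x := by
          rw [smul_smul, ← pow_succ]
        rw [this]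
        exact hmem (m + 1) (by omega)
    · intro hY
      have h3 : a ^ (n₀ + 1) • (a⁻¹ • x) ∈ U := hY (n₀ + 1)
      have heq : a ^ (n₀ + 1) • (a⁻¹ • x) = a ^ n₀ • x := by
        have h4 := smul_cancel_aux a n₀ 1 x
        rwa [pow_one] at h4
      rw [heq] at h3
      exact hn₀ h3

/- ### Orbit convergence lemmas on the real line -/


lemma orbitA {h : ℝ → ℝ} (hm : StrictMono h) (hc : Continuous h) {y b : ℝ}
    (hyb : y < b) (hb : h b = b) (hid : ∀ z, y ≤ z → z < b → z < h z) :
    (∀ n, y ≤ h^[n] y ∧ h^[n] y < b) ∧ Monotone (fun n => h^[n] y) ∧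
      Tendsto (fun n => h^[n] y) atTop (𝓝 b) := by
  have hbound : ∀ n, y ≤ h^[n] y ∧ h^[n] y < b := by
    intro n
    induction n with
    | zero => exact ⟨le_rfl, hyb⟩
    | succ k ih =>
      rw [Function.iterate_succ_apply']
      refine ⟨le_of_lt ?_, ?_⟩
      · exact lt_of_le_of_lt ih.1 (hid _ ih.1 ih.2)
      · calc h (h^[k] y) < h b := hm ih.2
          _ = b := hb
  have hmono : Monotone fun n => h^[n] y := by
    apply monotone_nat_of_le_succ
    intro n
    rw [Function.iterate_succ_apply']
    exact le_of_lt (hid _ (hbound n).1 (hbound n).2)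
  have hbdd : BddAbove (Set.range fun n => h^[n] y) := ⟨b, by rintro _ ⟨n, rfl⟩; exact (hbound n).2.le⟩
  have htend : Tendsto (fun n => h^[n] y) atTop (𝓝 (⨆ n, h^[n] y)) :=
    tendsto_atTop_ciSup hmono hbdd
  set L := ⨆ n, h^[n] y with hL
  have hLb : L ≤ b := ciSup_le fun n => (hbound n).2.le
  have hyL : y ≤ L := le_ciSup hbdd 0
  have hfix : h L = L := by
    have h1 : Tendsto (fun n => h (h^[n] y)) atTop (𝓝 (h L)) := (hc.tendsto L).comp htend
    have h2 : Tendsto (fun n => h (h^[n] y)) atTop (𝓝 L) := by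
      have : (fun n => h (h^[n] y)) = fun n => h^[n + 1] y := by
        funext n; rw [Function.iterate_succ_apply']
      rw [this]
      exact (tendsto_add_atTop_iff_nat 1).mpr htend
    exact tendsto_nhds_unique h1 h2
  have : L = b := by
    rcases lt_or_eq_of_le hLb with hlt | he
    · exact absurd hfix (ne_of_gt (hid _ hyL hlt))
    · exact he
  rw [this] at htend
  exact ⟨hbound, hmono, htend⟩

lemma orbitB {h : ℝ → ℝ} (hm : StrictMono h) (hc : Continuous h) {y a : ℝ}
    (hay : a < y) (ha : h a = a) (hid : ∀ z, a < z → z ≤ y → h z < z) :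
    (∀ n, a < h^[n] y ∧ h^[n] y ≤ y) ∧ Antitone (fun n => h^[n] y) ∧
      Tendsto (fun n => h^[n] y) atTop (𝓝 a) := by
  set h' : ℝ → ℝ := fun z => -h (-z) with hh'
  have hm' : StrictMono h' := fun u v huv => by
    simp only [hh', neg_lt_neg_iff]
    exact hm (neg_lt_neg huv)
  have hc' : Continuous h' := (hc.comp continuous_neg).neg
  have hconj : ∀ n, h'^[n] (-y) = -(h^[n] y) := by
    intro n
    induction n with
    | zero => simp
    | succ k ih =>
      rw [Function.iterate_succ_apply', Function.iterate_succ_apply', ih]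
      simp [hh']
  have key := orbitA hm' hc' (y := -y) (b := -a) (by linarith)
    (by simp [hh', ha]) (fun z h1 h2 => by
      have := hid (-z) (by linarith) (by linarith)
      simp only [hh']
      linarith)
  obtain ⟨hbd, hmono, htd⟩ := key
  refine ⟨fun n => ?_, fun i j hij => ?_, ?_⟩
  · have := hbd n; rw [hconj n] at this; constructor <;> linarith [this.1, this.2]
  · have h5 := hmono hij
    simp only [hconj i, hconj j] at h5
    simpa using h5
  · have : Tendsto (fun n => -(h'^[n] (-y))) atTop (𝓝 (-(-a))) := htd.neg
    simp only [neg_neg] at this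
    convert this using 2 with n
    rw [hconj n, neg_neg]

lemma sign_const {φ : ℝ → ℝ} (hc : Continuous φ) {a b u v : ℝ}
    (hne : ∀ z ∈ Set.Ioo a b, φ z ≠ 0)
    (hu : u ∈ Set.Ioo a b) (hv : v ∈ Set.Ioo a b) (hup : 0 < φ u) : 0 < φ v := by
  by_contra hneg
  push_neg at hneg
  have hvlt : φ v < 0 := lt_of_le_of_ne hneg (hne v hv)
  rcases le_total u v with h | h
  · obtain ⟨w, hw, hw0⟩ := intermediate_value_Icc' h hc.continuousOn ⟨hvlt.le, hup.le⟩
    exact hne w ⟨lt_of_lt_of_le hu.1 hw.1, lt_of_le_of_lt hw.2 hv.2⟩ hw0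
  · obtain ⟨w, hw, hw0⟩ := intermediate_value_Icc h hc.continuousOn ⟨hvlt.le, hup.le⟩
    exact hne w ⟨lt_of_lt_of_le hv.1 hw.1, lt_of_le_of_lt hw.2 hu.2⟩ hw0

/- ### Lift with a genuine fixed point -/

lemma lift_exists (f : Homeomorph S1 S1) (hf : IsOrientationPreserving f)
    (hfix : (FixSet f).Nonempty) :
    ∃ G : ℝ → ℝ, Continuous G ∧ StrictMono G ∧ (∀ x : ℝ, G (x + 1) = G x + 1) ∧
      (∀ x : ℝ, f (x : S1) = ((G x : ℝ) : S1)) ∧ ∃ x₀ : ℝ, G x₀ = x₀ := by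
  obtain ⟨F, hFc, hFm, hFp, hFl⟩ := hf
  obtain ⟨p, hp⟩ := hfix
  obtain ⟨x₀, rfl⟩ := QuotientAddGroup.mk_surjective p
  have h1 : ((F x₀ : ℝ) : S1) = ((x₀ : ℝ) : S1) := by rw [← hFl]; exact hp
  have h2 : ((F x₀ - x₀ : ℝ) : S1) = 0 := by
    rw [AddCircle.coe_sub, h1, sub_self]
  rw [AddCircle.coe_eq_zero_iff] at h2
  obtain ⟨n, hn⟩ := h2
  have hn' : F x₀ - x₀ = (n : ℝ) := by rw [← hn]; simp
  refine ⟨fun x => F x - n, by continuity, fun u v huv => by simpa using hFm huv,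
    fun x => by simp [hFp x]; ring, fun x => ?_, x₀, show F x₀ - (n:ℝ) = x₀ by linarith⟩
  rw [hFl]
  have : ((n : ℝ) : S1) = 0 := by
    rw [AddCircle.coe_eq_zero_iff]; exact ⟨n, by simp⟩
  rw [AddCircle.coe_sub, this, sub_zero]

/- ### The key dynamical lemma -/

lemma eventually_in (f : Homeomorph S1 S1) (hf : IsOrientationPreserving f)
    (hfix : (FixSet f).Nonempty) {U : Set S1} (hU : IsOpen U) (hFU : FixSet f ⊆ U) :
    ∃ N : ℕ, 1 ≤ N ∧ ∀ m : ℕ, N ≤ m → ∀ x ∉ U,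
      (⇑f)^[m] x ∈ U ∧ (⇑(f.symm))^[m] x ∈ U := by
  obtain ⟨G, hGc, hGm, hGp, hGl, x₀, hx₀⟩ := lift_exists f hf hfix
  have hGp' : ∀ x : ℝ, G (x - 1) = G x - 1 := by
    intro x; have := hGp (x - 1); simp at this; linarith
  have hGnat : ∀ (k : ℕ) (x : ℝ), G (x + k) = G x + k := by
    intro k
    induction k with
    | zero => simp
    | succ j ih =>
      intro x
      push_cast
      rw [show x + ((j : ℝ) + 1) = (x + j) + 1 by ring, hGp, ih]
      ring
  have hGnat' : ∀ (k : ℕ) (x : ℝ), G (x - k) = G x - k := by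
    intro k
    induction k with
    | zero => simp
    | succ j ih =>
      intro x
      push_cast
      rw [show x - ((j : ℝ) + 1) = (x - j) - 1 by ring, hGp', ih]
      ring
  have hGz : ∀ (n : ℤ) (x : ℝ), G (x + n) = G x + n := by
    intro n x
    obtain ⟨k, rfl | rfl⟩ := Int.eq_nat_or_neg n
    · push_cast
      exact hGnat k x
    · push_cast
      rw [show x + -(k : ℝ) = x - k by ring, hGnat']
      ring
  have hZint : ∀ n : ℤ, G (x₀ + n) = x₀ + n := fun n => by rw [hGz, hx₀]
  have htop : Tendsto G atTop atTop :=
    tendsto_atTop_atTop_of_monotone hGm.monotone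
      (fun c => ⟨x₀ + ⌈c - x₀⌉, by rw [hZint]; linarith [Int.le_ceil (c - x₀)]⟩)
  have hbot : Tendsto G atBot atBot :=
    tendsto_atBot_atBot_of_monotone hGm.monotone
      (fun c => ⟨x₀ + ⌊c - x₀⌋, by rw [hZint]; linarith [Int.floor_le (c - x₀)]⟩)
  have hGsurj : Function.Surjective G := hGc.surjective htop hbot
  set e : ℝ ≃o ℝ := StrictMono.orderIsoOfSurjective G hGm hGsurj with he
  have heG : ∀ x, e x = G x := fun _ => rfl
  have hec : Continuous (⇑e.symm) := OrderIso.continuous e.symm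
  have hesm : StrictMono (⇑e.symm) := e.symm.strictMono
  have hsl : ∀ x : ℝ, f.symm ((x : ℝ) : S1) = ((e.symm x : ℝ) : S1) := by
    intro x
    have h0 : G (e.symm x) = x := e.apply_symm_apply x
    have h1 : f ((e.symm x : ℝ) : S1) = ((x : ℝ) : S1) := by rw [hGl, h0]
    rw [← h1, Homeomorph.symm_apply_apply]
  have hit : ∀ (n : ℕ) (x : ℝ), (⇑f)^[n] ((x : ℝ) : S1) = ((G^[n] x : ℝ) : S1) := by
    intro n
    induction n with
    | zero => intro x; simp
    | succ k ih =>
      intro x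
      rw [Function.iterate_succ_apply', Function.iterate_succ_apply', ih, hGl]
  have hit' : ∀ (n : ℕ) (x : ℝ), (⇑f.symm)^[n] ((x : ℝ) : S1) = ((e.symm^[n] x : ℝ) : S1) := by
    intro n
    induction n with
    | zero => intro x; simp
    | succ k ih =>
      intro x
      rw [Function.iterate_succ_apply', Function.iterate_succ_apply', ih, hsl]
  set Z : Set ℝ := {z : ℝ | G z = z} with hZdef
  have hZc : IsClosed Z := isClosed_eq hGc continuous_id
  set U' : Set ℝ := ((↑) : ℝ → S1) ⁻¹' U with hU'def
  have hcont_coe : Continuous ((↑) : ℝ → S1) := continuous_quotient_mk'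
  have hopen : IsOpenMap ((↑) : ℝ → S1) := QuotientAddGroup.isOpenMap_coe
  have hU'o : IsOpen U' := hU.preimage hcont_coe
  have hZU' : Z ⊆ U' := by
    intro z hz
    exact hFU (show f ((z : ℝ) : S1) = ((z : ℝ) : S1) by rw [hGl]; exact congrArg _ hz)
  have he_fix : ∀ z, G z = z → e.symm z = z := by
    intro z hz
    have h1 : e z = z := hz
    exact e.symm_apply_eq.mpr h1.symm
  -- per-point statement
  have key : ∀ s : S1, s ∉ U → ∃ W : Set S1, IsOpen W ∧ s ∈ W ∧
      ∃ Ns : ℕ, ∀ t ∈ W, ∀ n : ℕ, Ns ≤ n → (⇑f)^[n] t ∈ U ∧ (⇑f.symm)^[n] t ∈ U := by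
    intro s hs
    obtain ⟨x, rfl⟩ := QuotientAddGroup.mk_surjective s
    have hxU' : x ∉ U' := hs
    have hxZ : G x ≠ x := fun h => hxU' (hZU' h)
    -- the fixed points bracketing x
    have hbne : (Z ∩ Set.Ici x).Nonempty :=
      ⟨x₀ + ⌈x - x₀⌉, hZint _, by
        simp only [Set.mem_Ici]; linarith [Int.le_ceil (x - x₀)]⟩
    have hbdd : BddBelow (Z ∩ Set.Ici x) := ⟨x, fun z hz => hz.2⟩
    set b := sInf (Z ∩ Set.Ici x) with hbdef
    have hbmem : b ∈ Z ∩ Set.Ici x := (hZc.inter isClosed_Ici).csInf_mem hbne hbdd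
    have hGb : G b = b := hbmem.1
    have hxb : x < b := lt_of_le_of_ne hbmem.2 (fun h => hxZ (by rw [h]; exact hGb))
    have hane : (Z ∩ Set.Iic x).Nonempty :=
      ⟨x₀ + ⌊x - x₀⌋, hZint _, by
        simp only [Set.mem_Iic]; linarith [Int.floor_le (x - x₀)]⟩
    have hadd : BddAbove (Z ∩ Set.Iic x) := ⟨x, fun z hz => hz.2⟩
    set a := sSup (Z ∩ Set.Iic x) with hadef
    have hamem : a ∈ Z ∩ Set.Iic x := (hZc.inter isClosed_Iic).csSup_mem hane hadd
    have hGa : G a = a := hamem.1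
    have hax : a < x := lt_of_le_of_ne hamem.2 (fun h => hxZ (h ▸ hGa))
    have hnofix : ∀ z ∈ Set.Ioo a b, G z ≠ z := by
      intro z hz hzZ
      rcases le_total x z with h | h
      · exact absurd (csInf_le hbdd ⟨hzZ, h⟩) (not_le.mpr hz.2)
      · exact absurd (le_csSup hadd ⟨hzZ, h⟩) (not_le.mpr hz.1)
    have hxIoo : x ∈ Set.Ioo a b := ⟨hax, hxb⟩
    set η := min (x - a) (b - x) / 2 with hηdef
    have hηpos : 0 < η := by
      have h1 : 0 < x - a := by linarith
      have h2 : 0 < b - x := by linarith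
      have := lt_min h1 h2
      simp only [hηdef]; positivity
    have hmin1 : η ≤ (x - a) / 2 := by
      simp only [hηdef]; gcongr; exact min_le_left _ _
    have hmin2 : η ≤ (b - x) / 2 := by
      simp only [hηdef]; gcongr; exact min_le_right _ _
    set y₁ := x - η with hy₁def
    set y₂ := x + η with hy₂def
    have hay₁ : a < y₁ := by simp only [hy₁def]; linarith
    have hy₂b : y₂ < b := by simp only [hy₂def]; linarith
    have hy₁x : y₁ < x := by simp only [hy₁def]; linarith
    have hxy₂ : x < y₂ := by simp only [hy₂def]; linarith
    obtain ⟨ε₁, hε₁, hball₁⟩ := Metric.isOpen_iff.mp hU'o b (hZU' hGb)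
    obtain ⟨ε₂, hε₂, hball₂⟩ := Metric.isOpen_iff.mp hU'o a (hZU' hGa)
    set ε := min ε₁ ε₂ with hεdef
    have hεpos : 0 < ε := lt_min hε₁ hε₂
    have hεle₁ : ε ≤ ε₁ := min_le_left _ _
    have hεle₂ : ε ≤ ε₂ := min_le_right _ _
    have hφc : Continuous (fun z : ℝ => G z - z) := by continuity
    have hφne : ∀ w ∈ Set.Ioo a b, (fun z : ℝ => G z - z) w ≠ 0 :=
      fun w hw => sub_ne_zero.mpr (hnofix w hw)
    rcases lt_or_gt_of_ne hxZ with hneg | hpos'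
    · -- G x < x : forward orbit decreases to a, backward increases to b
      have hneg' : ∀ z ∈ Set.Ioo a b, G z < z := by
        intro z hz
        by_contra hcon
        push_neg at hcon
        have h0 : 0 < G z - z := lt_of_le_of_ne (by linarith) (Ne.symm (sub_ne_zero.mpr (hnofix z hz)))
        have := sign_const hφc hφne hz hxIoo h0
        linarith
      have hidF : ∀ z, a < z → z ≤ y₂ → G z < z := fun z h1 h2 =>
        hneg' z ⟨h1, by linarith⟩
      obtain ⟨hbdF, hmonoF, htdF⟩ := orbitB hGm hGc (show a < y₂ by linarith) hGa hidF
      have hsymm_b : e.symm b = b := he_fix b hGb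
      have hidB : ∀ z, y₁ ≤ z → z < b → z < e.symm z := by
        intro z h1 h2
        have hz : G z < z := hneg' z ⟨by linarith, h2⟩
        have h3 : e.symm (G z) < e.symm z := hesm hz
        rwa [show e.symm (G z) = z from e.symm_apply_eq.mpr rfl] at h3
      obtain ⟨hbdB, hmonoB, htdB⟩ := orbitA hesm hec (show y₁ < b by linarith) hsymm_b hidB
      obtain ⟨N₁, hN₁⟩ := eventually_atTop.mp
        (htdF.eventually (eventually_lt_nhds (show a < a + ε by linarith)))
      obtain ⟨N₂, hN₂⟩ := eventually_atTop.mp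
        (htdB.eventually (eventually_gt_nhds (show b - ε < b by linarith)))
      refine ⟨((↑) : ℝ → S1) '' Set.Ioo y₁ y₂, hopen _ isOpen_Ioo,
        ⟨x, ⟨hy₁x, hxy₂⟩, rfl⟩, max N₁ N₂, ?_⟩
      rintro t ⟨w, hw, rfl⟩ n hn
      have hwa : ∀ k, a < G^[k] w := by
        intro k
        induction k with
        | zero => simpa using lt_trans hay₁ hw.1
        | succ j ih =>
          rw [Function.iterate_succ_apply']
          calc a = G a := hGa.symm
            _ < G (G^[j] w) := hGm ih
      have hwb : ∀ k, e.symm^[k] w < b := by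
        intro k
        induction k with
        | zero => simpa using lt_trans hw.2 hy₂b
        | succ j ih =>
          rw [Function.iterate_succ_apply']
          calc e.symm (e.symm^[j] w) < e.symm b := hesm ih
            _ = b := hsymm_b
      constructor
      · rw [hit n w]
        refine hball₂ ?_
        have h5 : G^[n] w ≤ G^[n] y₂ := (hGm.monotone.iterate n) hw.2.le
        have h6 : G^[n] y₂ < a + ε := hN₁ n (le_trans (le_max_left _ _) hn)
        have h7 : a < G^[n] w := hwa n
        rw [Metric.mem_ball, Real.dist_eq, abs_lt]
        constructor <;> linarith
      · rw [hit' n w]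
        refine hball₁ ?_
        have h5 : e.symm^[n] y₁ ≤ e.symm^[n] w := (hesm.monotone.iterate n) hw.1.le
        have h6 : b - ε < e.symm^[n] y₁ := hN₂ n (le_trans (le_max_right _ _) hn)
        have h7 : e.symm^[n] w < b := hwb n
        rw [Metric.mem_ball, Real.dist_eq, abs_lt]
        constructor <;> linarith
    · -- G x > x : forward orbit increases to b, backward decreases to a
      have hposz : ∀ z ∈ Set.Ioo a b, z < G z := by
        intro z hz
        have h0 : 0 < G x - x := by linarith
        have h8 := sign_const hφc hφne hxIoo hz h0
        have h9 : 0 < G z - z := h8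
        linarith
      have hidF : ∀ z, y₁ ≤ z → z < b → z < G z := fun z h1 h2 =>
        hposz z ⟨by linarith, h2⟩
      obtain ⟨hbdF, hmonoF, htdF⟩ := orbitA hGm hGc (show y₁ < b by linarith) hGb hidF
      have hsymm_a : e.symm a = a := he_fix a hGa
      have hidB : ∀ z, a < z → z ≤ y₂ → e.symm z < z := by
        intro z h1 h2
        have hz : z < G z := hposz z ⟨h1, by linarith⟩
        have h3 : e.symm z < e.symm (G z) := hesm hz
        rwa [show e.symm (G z) = z from e.symm_apply_eq.mpr rfl] at h3
      obtain ⟨hbdB, hmonoB, htdB⟩ := orbitB hesm hec (show a < y₂ by linarith) hsymm_a hidB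
      obtain ⟨N₁, hN₁⟩ := eventually_atTop.mp
        (htdF.eventually (eventually_gt_nhds (show b - ε < b by linarith)))
      obtain ⟨N₂, hN₂⟩ := eventually_atTop.mp
        (htdB.eventually (eventually_lt_nhds (show a < a + ε by linarith)))
      refine ⟨((↑) : ℝ → S1) '' Set.Ioo y₁ y₂, hopen _ isOpen_Ioo,
        ⟨x, ⟨hy₁x, hxy₂⟩, rfl⟩, max N₁ N₂, ?_⟩
      rintro t ⟨w, hw, rfl⟩ n hn
      have hwb : ∀ k, G^[k] w < b := by
        intro k
        induction k with
        | zero => simpa using lt_trans hw.2 hy₂b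
        | succ j ih =>
          rw [Function.iterate_succ_apply']
          calc G (G^[j] w) < G b := hGm ih
            _ = b := hGb
      have hwa : ∀ k, a < e.symm^[k] w := by
        intro k
        induction k with
        | zero => simpa using lt_trans hay₁ hw.1
        | succ j ih =>
          rw [Function.iterate_succ_apply']
          calc a = e.symm a := hsymm_a.symm
            _ < e.symm (e.symm^[j] w) := hesm ih
      constructor
      · rw [hit n w]
        refine hball₁ ?_
        have h5 : G^[n] y₁ ≤ G^[n] w := (hGm.monotone.iterate n) hw.1.le
        have h6 : b - ε < G^[n] y₁ := hN₁ n (le_trans (le_max_left _ _) hn)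
        have h7 : G^[n] w < b := hwb n
        rw [Metric.mem_ball, Real.dist_eq, abs_lt]
        constructor <;> linarith
      · rw [hit' n w]
        refine hball₂ ?_
        have h5 : e.symm^[n] w ≤ e.symm^[n] y₂ := (hesm.monotone.iterate n) hw.2.le
        have h6 : e.symm^[n] y₂ < a + ε := hN₂ n (le_trans (le_max_right _ _) hn)
        have h7 : a < e.symm^[n] w := hwa n
        rw [Metric.mem_ball, Real.dist_eq, abs_lt]
        constructor <;> linarith
  -- compactness wrap-up
  classical
  have hCc : IsCompact Uᶜ := hU.isClosed_compl.isCompact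
  have hkey : ∀ s : (Uᶜ : Set S1), ∃ W : Set S1, IsOpen W ∧ (s : S1) ∈ W ∧
      ∃ Ns : ℕ, ∀ t ∈ W, ∀ n : ℕ, Ns ≤ n → (⇑f)^[n] t ∈ U ∧ (⇑f.symm)^[n] t ∈ U :=
    fun s => key s s.2
  choose W hWo hWmem Ns hNs using hkey
  have hcover : Uᶜ ⊆ ⋃ s : (Uᶜ : Set S1), W s := fun x hx => Set.mem_iUnion.mpr ⟨⟨x, hx⟩, hWmem ⟨x, hx⟩⟩
  obtain ⟨tf, htf⟩ := hCc.elim_finite_subcover W hWo hcover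
  refine ⟨1 + tf.sup Ns, by omega, fun m hm x hx => ?_⟩
  obtain ⟨s, hst, hxW⟩ := Set.mem_iUnion₂.mp (htf hx)
  refine hNs s x hxW m (le_trans ?_ hm)
  calc Ns s ≤ tf.sup Ns := Finset.le_sup hst
    _ ≤ 1 + tf.sup Ns := by omega

/- ### Group action of homeomorphisms on the circle -/

instance : MulAction (Homeomorph S1 S1) S1 where
  smul f x := f x
  one_smul _ := rfl
  mul_smul _ _ _ := rfl

lemma homeo_smul_def (f : Homeomorph S1 S1) (x : S1) : f • x = f x := rfl

lemma homeo_pow_smul (f : Homeomorph S1 S1) (n : ℕ) (x : S1) :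
    (f ^ n) • x = (⇑f)^[n] x := by
  induction n with
  | zero => rfl
  | succ k ih =>
    rw [pow_succ', mul_smul, ih, Function.iterate_succ_apply']
    rfl

lemma homeo_inv_coe (f : Homeomorph S1 S1) : ⇑(f⁻¹) = ⇑(f.symm) := rfl

/- ### Main theorem -/

/-- If `f` and `g` are orientation-preserving homeomorphisms of `S¹` with nonempty
fixed-point sets, the fixed set of each contained in the support of the other, then
`⟨f, g⟩` contains a free subgroup of rank 2. -/
theorem free_subgroup_of_crossed_fixed_sets (f g : Homeomorph S1 S1)
    (hf : IsOrientationPreserving f) (hg : IsOrientationPreserving g)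
    (hfne : (FixSet f).Nonempty) (hgne : (FixSet g).Nonempty)
    (hfg : FixSet f ⊆ Supp g) (hgf : FixSet g ⊆ Supp f) :
    ∃ φ : FreeGroup (Fin 2) →* Homeomorph S1 S1,
      Function.Injective φ ∧ ∀ w : FreeGroup (Fin 2),
        φ w ∈ Subgroup.closure {f, g} := by
  classical
  -- disjoint closed fixed sets
  have hclf : IsClosed (FixSet f) := isClosed_eq f.continuous continuous_id
  have hclg : IsClosed (FixSet g) := isClosed_eq g.continuous continuous_id
  have hdisj : Disjoint (FixSet f) (FixSet g) :=
    Set.disjoint_left.mpr fun x hxf hxg => hfg hxf hxg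
  obtain ⟨U, V, hUo, hVo, hfU, hgV, hUV⟩ :=
    SeparatedNhds.of_isCompact_isClosed hclf.isCompact hclg hdisj
  obtain ⟨Nf, hNf1, hNf⟩ := eventually_in f hf hfne hUo hfU
  obtain ⟨Ng, hNg1, hNg⟩ := eventually_in g hg hgne hVo hgV
  obtain ⟨p, hpf⟩ := hfne
  obtain ⟨q, hqg⟩ := hgne
  -- the two generators
  set af : Homeomorph S1 S1 := f ^ Nf with haf
  set ag : Homeomorph S1 S1 := g ^ Ng with hag
  have hfixed_iter : ∀ (h : Homeomorph S1 S1) (x : S1), h x = x → ∀ k, (⇑h)^[k] x = x := by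
    intro h x hx k
    induction k with
    | zero => rfl
    | succ j ih => rw [Function.iterate_succ_apply', ih, hx]
  have hsetsf : ∃ X Y : Set S1, X.Nonempty ∧ Disjoint X Y ∧ X ⊆ U ∧ Y ⊆ U ∧
      af • Yᶜ ⊆ X ∧ af⁻¹ • Xᶜ ⊆ Y := by
    apply pingpong_sets af U p (hfU hpf)
    · rw [homeo_smul_def, haf]
      show (f ^ Nf) p = p
      have := homeo_pow_smul f Nf p
      rw [homeo_smul_def] at this
      rw [this]
      exact hfixed_iter f p hpf Nf
    · intro m hm x hx
      constructor
      · rw [haf, ← pow_mul, homeo_pow_smul]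
        exact (hNf (Nf * m) (Nat.le_mul_of_pos_right Nf (by omega)) x hx).1
      · rw [haf, ← inv_pow, ← pow_mul, homeo_pow_smul, homeo_inv_coe]
        exact (hNf (Nf * m) (Nat.le_mul_of_pos_right Nf (by omega)) x hx).2
  have hsetsg : ∃ X Y : Set S1, X.Nonempty ∧ Disjoint X Y ∧ X ⊆ V ∧ Y ⊆ V ∧
      ag • Yᶜ ⊆ X ∧ ag⁻¹ • Xᶜ ⊆ Y := by
    apply pingpong_sets ag V q (hgV hqg)
    · rw [homeo_smul_def, hag]
      show (g ^ Ng) q = q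
      have := homeo_pow_smul g Ng q
      rw [homeo_smul_def] at this
      rw [this]
      exact hfixed_iter g q hqg Ng
    · intro m hm x hx
      constructor
      · rw [hag, ← pow_mul, homeo_pow_smul]
        exact (hNg (Ng * m) (Nat.le_mul_of_pos_right Ng (by omega)) x hx).1
      · rw [hag, ← inv_pow, ← pow_mul, homeo_pow_smul, homeo_inv_coe]
        exact (hNg (Ng * m) (Nat.le_mul_of_pos_right Ng (by omega)) x hx).2
  obtain ⟨X0, Y0, hX0ne, hXY0, hX0U, hY0U, hX0, hY0⟩ := hsetsf
  obtain ⟨X1, Y1, hX1ne, hXY1, hX1V, hY1V, hX1, hY1⟩ := hsetsg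
  set a : Fin 2 → Homeomorph S1 S1 := ![af, ag] with ha
  set X : Fin 2 → Set S1 := ![X0, X1] with hXdef
  set Y : Fin 2 → Set S1 := ![Y0, Y1] with hYdef
  have hinj : Function.Injective (FreeGroup.lift a) := by
    apply FreeGroup.injective_lift_of_ping_pong a X Y
    · intro i; fin_cases i
      · simpa [hXdef] using hX0ne
      · simpa [hXdef] using hX1ne
    · intro i j hij
      fin_cases i <;> fin_cases j <;>
        simp only [Function.onFun, hXdef, Matrix.cons_val_zero, Matrix.cons_val_one,
          Matrix.head_cons] at *
      · exact absurd rfl hij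
      · exact hUV.mono hX0U hX1V
      · exact (hUV.mono hX0U hX1V).symm
      · exact absurd rfl hij
    · intro i j hij
      fin_cases i <;> fin_cases j <;>
        simp only [Function.onFun, hYdef, Matrix.cons_val_zero, Matrix.cons_val_one,
          Matrix.head_cons] at *
      · exact absurd rfl hij
      · exact hUV.mono hY0U hY1V
      · exact (hUV.mono hY0U hY1V).symm
      · exact absurd rfl hij
    · intro i j
      fin_cases i <;> fin_cases j <;>
        simp only [hXdef, hYdef, Matrix.cons_val_zero, Matrix.cons_val_one, Matrix.head_cons]
      · exact hXY0
      · exact hUV.mono hX0U hY1V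
      · exact (hUV.mono hY0U hX1V).symm
      · exact hXY1
    · intro i
      fin_cases i <;>
        simp only [ha, hXdef, hYdef, Matrix.cons_val_zero, Matrix.cons_val_one, Matrix.head_cons]
      · exact hX0
      · exact hX1
    · intro i
      fin_cases i <;>
        simp only [ha, hXdef, hYdef, Pi.inv_apply, Matrix.cons_val_zero, Matrix.cons_val_one,
          Matrix.head_cons]
      · exact hY0
      · exact hY1
  refine ⟨FreeGroup.lift a, hinj, fun w => ?_⟩
  have hmem : ∀ i, a i ∈ Subgroup.closure ({f, g} : Set (Homeomorph S1 S1)) := by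
    intro i
    fin_cases i
    · simp only [ha, Matrix.cons_val_zero, haf]
      exact pow_mem (Subgroup.subset_closure (by simp)) Nf
    · simp only [ha, Matrix.cons_val_one, Matrix.head_cons, hag]
      exact pow_mem (Subgroup.subset_closure (by simp)) Ng
  induction w using FreeGroup.induction_on with
  | C1 => simpa using one_mem _
  | of i => simpa using hmem i
  | inv_of i hi => simpa using inv_mem hi
  | mul x y hx hy => simpa using mul_mem hx hy
end
end

section
/- In the restricted wreath product W = ℤ ≀ ℤ², with a = (0, (1,0)) and b = (0, (0,1)) generating the top group and c the base-group generator supported at index (0,0): the elements [c,a], a, and b generate a subgroup of W isomorphic to ℤ ≀ ℤ². -/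
/-- The shift action of `T` on the restricted direct sum `⊕_{t ∈ T} ℤ`, as a
homomorphism to the automorphism group (multiplicative notation). -/
noncomputable def shiftAut (T : Type*) [AddCommGroup T] :
    Multiplicative T →* MulAut (Multiplicative (T →₀ ℤ)) :=
  MonoidHom.mk'
    (fun r => AddEquiv.toMultiplicative (Finsupp.domCongr (Equiv.addRight r.toAdd)))
    (by
      intro a b
      ext f : 1
      refine Multiplicative.toAdd.injective (Finsupp.ext fun t => ?_)
      simp [Finsupp.domCongr, Finsupp.equivMapDomain, Equiv.Perm.mul_def, Equiv.trans_apply]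
      congr 1
      abel)

/-- The standard restricted wreath product `ℤ ≀ T = (⊕_{t ∈ T} ℤ) ⋊ T`. -/
abbrev ZW (T : Type*) [AddCommGroup T] :=
  SemidirectProduct (Multiplicative (T →₀ ℤ)) (Multiplicative T) (shiftAut T)

/-- The restricted wreath product `ℤ ≀ (ℤ × ℤ)`. -/
abbrev ZW2 := ZW (ℤ × ℤ)

/-- The generator `a = (0, (1,0))` of the top group of `ℤ ≀ ℤ²`. -/
noncomputable def genA : ZW2 := ⟨1, Multiplicative.ofAdd (1, 0)⟩

/-- The generator `b = (0, (0,1))` of the top group of `ℤ ≀ ℤ²`. -/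
noncomputable def genB : ZW2 := ⟨1, Multiplicative.ofAdd (0, 1)⟩

/-- The base-group generator `c` supported at the index `(0,0)`. -/
noncomputable def genC : ZW2 := ⟨Multiplicative.ofAdd (Finsupp.single ((0 : ℤ), (0 : ℤ)) 1), 1⟩

namespace WreathAux

open Multiplicative SemidirectProduct

abbrev Base := Multiplicative ((ℤ × ℤ) →₀ ℤ)
abbrev Top := Multiplicative (ℤ × ℤ)

noncomputable abbrev σ (r : Top) : MulAut Base := shiftAut (ℤ × ℤ) r

lemma sigma_sigma (u v : Top) (x : Base) : σ u (σ v x) = σ v (σ u x) := by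
  have h1 : σ u (σ v x) = ((shiftAut (ℤ×ℤ) u) * (shiftAut (ℤ×ℤ) v)) x := rfl
  have h2 : σ v (σ u x) = ((shiftAut (ℤ×ℤ) v) * (shiftAut (ℤ×ℤ) u)) x := rfl
  rw [h1, h2, ← map_mul, ← map_mul, mul_comm]

noncomputable def psi : Base →* Base :=
  MonoidHom.mk' (fun f => f⁻¹ * σ (ofAdd ((1:ℤ),(0:ℤ)))⁻¹ f)
    (by
      intro a b
      simp [map_mul, mul_comm, mul_left_comm, mul_assoc])

lemma psi_equivariant (g : Top) :
    psi.comp ((shiftAut (ℤ×ℤ) g).toMonoidHom) = ((shiftAut (ℤ×ℤ) g).toMonoidHom).comp psi := by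
  refine MonoidHom.ext fun f => ?_
  simp only [MonoidHom.comp_apply, MulEquiv.coe_toMonoidHom, psi, MonoidHom.mk'_apply]
  rw [map_mul, map_inv, sigma_sigma]

noncomputable def Phi : ZW2 →* ZW2 :=
  SemidirectProduct.map psi (MonoidHom.id _) (fun g => psi_equivariant g)

lemma eq_zero_of_shift (F : (ℤ×ℤ) →₀ ℤ) (h : ∀ t, F (t + (1,0)) = F t) : F = 0 := by
  ext t
  simp only [Finsupp.coe_zero, Pi.zero_apply]
  by_contra hne
  have h2 : ∀ n : ℕ, F (t + ((n:ℤ), 0)) = F t := by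
    intro n
    induction n with
    | zero => simp [Prod.mk_zero_zero]
    | succ n ih =>
      have e : t + (((n:ℤ)+1), (0:ℤ)) = t + ((n:ℤ), 0) + (1, 0) := by
        simp [Prod.ext_iff]; ring
      push_cast
      rw [e, h, ih]
  have hinj : Function.Injective (fun n : ℕ => t + ((n:ℤ), (0:ℤ))) := by
    intro m n hmn
    simp only [add_right_inj, Prod.mk.injEq] at hmn
    exact_mod_cast hmn.1
  have hmem : ∀ n : ℕ, t + ((n:ℤ), (0:ℤ)) ∈ (F.support : Set (ℤ×ℤ)) := by
    intro n
    simp [Finsupp.mem_support_iff, h2 n, hne]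
  exact Set.infinite_of_injective_forall_mem hinj hmem F.support.finite_toSet

lemma psi_injective : Function.Injective psi := by
  rw [injective_iff_map_eq_one]
  intro f hf
  have hσ : σ (ofAdd ((1:ℤ),(0:ℤ)))⁻¹ f = f := by
    have := hf
    simp only [psi, MonoidHom.mk'_apply] at this
    rwa [inv_mul_eq_one, eq_comm] at this
  have hF : ∀ t, f.toAdd (t + (1,0)) = f.toAdd t := by
    intro t
    have := congrArg (fun x : Base => x.toAdd t) hσ
    simpa [shiftAut, Finsupp.domCongr, Finsupp.equivMapDomain] using this
  have := eq_zero_of_shift f.toAdd hF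
  exact Multiplicative.toAdd.injective this

lemma Phi_injective : Function.Injective Phi := by
  intro x y hxy
  have h1 := congrArg SemidirectProduct.left hxy
  have h2 := congrArg SemidirectProduct.right hxy
  simp only [Phi, SemidirectProduct.map_left, SemidirectProduct.map_right,
    MonoidHom.id_apply] at h1 h2
  exact SemidirectProduct.ext (psi_injective h1) h2

end WreathAux

namespace WreathAux

open Multiplicative SemidirectProduct

lemma top_decomp (g : Top) : (inr g : ZW2) = genA ^ g.toAdd.1 * genB ^ g.toAdd.2 := by
  have h : genA ^ g.toAdd.1 * genB ^ g.toAdd.2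
      = (inr ((ofAdd ((1:ℤ),(0:ℤ)))^g.toAdd.1 * (ofAdd ((0:ℤ),(1:ℤ)))^g.toAdd.2) : ZW2) := by
    rw [map_mul, map_zpow, map_zpow]; rfl
  rw [h, ← ofAdd_zsmul, ← ofAdd_zsmul, ← ofAdd_add]
  congr 1
  · simp [Prod.ext_iff, Prod.smul_def, smul_eq_mul]

lemma inr_mem (g : Top) : (inr g : ZW2) ∈ Subgroup.closure {genC, genA, genB} := by
  rw [top_decomp]
  exact mul_mem (zpow_mem (Subgroup.subset_closure (by simp)) _)
    (zpow_mem (Subgroup.subset_closure (by simp)) _)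

lemma shift_single (t : ℤ × ℤ) :
    (shiftAut (ℤ×ℤ)) (ofAdd t) (ofAdd (Finsupp.single ((0:ℤ),(0:ℤ)) (1:ℤ)))
      = ofAdd (Finsupp.single t (1:ℤ)) := by
  refine congrArg ofAdd ?_
  show Finsupp.domCongr (Equiv.addRight ((ofAdd t).toAdd)) (Finsupp.single ((0:ℤ),(0:ℤ)) 1)
      = Finsupp.single t 1
  simp [Finsupp.domCongr, Finsupp.equivMapDomain_single, Prod.mk_zero_zero]

lemma single_mem (t : ℤ × ℤ) :
    (inl (ofAdd (Finsupp.single t (1:ℤ))) : ZW2) ∈ Subgroup.closure {genC, genA, genB} := by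
  have key : (inl (ofAdd (Finsupp.single t (1:ℤ))) : ZW2)
      = inr (ofAdd t) * genC * (inr (ofAdd t))⁻¹ := by
    rw [← shift_single, SemidirectProduct.inl_aut, map_inv]
    rfl
  rw [key]
  exact mul_mem (mul_mem (inr_mem _) (Subgroup.subset_closure (by simp)))
    ((Subgroup.inv_mem_iff _).2 (inr_mem _))

lemma inl_mem (f : (ℤ×ℤ) →₀ ℤ) :
    (inl (ofAdd f) : ZW2) ∈ Subgroup.closure {genC, genA, genB} := by
  induction f using Finsupp.induction with
  | zero => simpa using one_mem (Subgroup.closure {genC, genA, genB})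
  | single_add a b f _ _ ih =>
    rw [ofAdd_add, map_mul]
    refine mul_mem ?_ ih
    have hb : Finsupp.single a b = b • Finsupp.single a (1:ℤ) := by
      rw [Finsupp.smul_single, smul_eq_mul, mul_one]
    rw [hb, ofAdd_zsmul, map_zpow]
    exact zpow_mem (single_mem a) b

lemma gens_top : Subgroup.closure {genC, genA, genB} = (⊤ : Subgroup ZW2) := by
  rw [Subgroup.eq_top_iff']
  intro x
  rw [← SemidirectProduct.inl_left_mul_inr_right x]
  exact mul_mem (by simpa using inl_mem x.left.toAdd) (inr_mem x.right)

lemma Phi_genA : Phi genA = genA := by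
  refine SemidirectProduct.ext ?_ rfl
  show psi 1 = 1
  exact map_one psi

lemma Phi_genB : Phi genB = genB := by
  refine SemidirectProduct.ext ?_ rfl
  show psi 1 = 1
  exact map_one psi

lemma Phi_genC : Phi genC = genC⁻¹ * genA⁻¹ * genC * genA := by
  ext : 1
  · show psi genC.left = _
    simp [psi, genC, genA, SemidirectProduct.mul_left, SemidirectProduct.inv_left,
      SemidirectProduct.mul_right, SemidirectProduct.inv_right, σ]
  · show (1 : Top) = _
    simp [genC, genA, SemidirectProduct.mul_right, SemidirectProduct.inv_right]

end WreathAux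


/-- In `W = ℤ ≀ ℤ²`, the elements `[c,a] = c⁻¹a⁻¹ca`, `a`, `b` generate a subgroup
isomorphic to `ℤ ≀ ℤ²`. -/
theorem commutator_a_b_generate_ZW2 :
    Nonempty
      ((Subgroup.closure {genC⁻¹ * genA⁻¹ * genC * genA, genA, genB} : Subgroup ZW2)
        ≃* ZW2) := by
  have himg : {genC⁻¹ * genA⁻¹ * genC * genA, genA, genB}
      = WreathAux.Phi '' {genC, genA, genB} := by
    simp [Set.image_insert_eq, WreathAux.Phi_genA, WreathAux.Phi_genB, WreathAux.Phi_genC]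
  have hcl : (Subgroup.closure {genC⁻¹ * genA⁻¹ * genC * genA, genA, genB} : Subgroup ZW2)
      = WreathAux.Phi.range := by
    rw [himg, ← MonoidHom.map_closure, WreathAux.gens_top, ← MonoidHom.range_eq_map]
  exact ⟨(MulEquiv.subgroupCongr hcl).trans (MonoidHom.ofInjective WreathAux.Phi_injective).symm⟩
end

section
/- In ℤ ≀ ℤ², for any nonzero element ω of the base group, the subgroup generated by ω together with the top group ℤ² is isomorphic to ℤ ≀ ℤ². -/
abbrev R2 := AddMonoidAlgebra ℤ (ℤ × ℤ)

abbrev toR (x : (ℤ × ℤ) →₀ ℤ) : R2 := AddMonoidAlgebra.ofCoeff x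

lemma shift_toAdd (g : Multiplicative (ℤ × ℤ)) (m : Multiplicative ((ℤ × ℤ) →₀ ℤ)) :
    toR (shiftAut (ℤ × ℤ) g m).toAdd = AddMonoidAlgebra.single g.toAdd 1 * toR m.toAdd := by
  ext t
  rw [AddMonoidAlgebra.coeff_single_mul_apply]
  simp [shiftAut, Finsupp.domCongr, Finsupp.equivMapDomain]
  congr 1
  abel

noncomputable def mulOmega (ω : R2) :
    Multiplicative ((ℤ × ℤ) →₀ ℤ) →* Multiplicative ((ℤ × ℤ) →₀ ℤ) :=
  AddMonoidHom.toMultiplicative (AddMonoidHom.mk' (fun x => (toR x * ω).coeff)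
    (fun a b => by rw [show toR (a + b) = toR a + toR b from rfl, add_mul]; rfl))

lemma mulOmega_toAdd (ω : R2) (m : Multiplicative ((ℤ × ℤ) →₀ ℤ)) :
    toR (mulOmega ω m).toAdd = toR m.toAdd * ω := rfl

lemma compat (ω : R2) (g : Multiplicative (ℤ × ℤ)) :
    (mulOmega ω).comp ((shiftAut (ℤ × ℤ)) g).toMonoidHom
      = ((shiftAut (ℤ × ℤ)) ((MonoidHom.id (Multiplicative (ℤ × ℤ))) g)).toMonoidHom.comp
          (mulOmega ω) := by
  refine MonoidHom.ext fun n => Multiplicative.toAdd.injective (AddMonoidAlgebra.ofCoeff_injective ?_)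
  show toR (Multiplicative.toAdd ((mulOmega ω).comp ((shiftAut (ℤ × ℤ)) g).toMonoidHom n))
      = toR (Multiplicative.toAdd
          ((((shiftAut (ℤ × ℤ)) ((MonoidHom.id _) g)).toMonoidHom.comp (mulOmega ω)) n))
  rw [MonoidHom.comp_apply, MonoidHom.comp_apply, MulEquiv.coe_toMonoidHom,
    MulEquiv.coe_toMonoidHom, MonoidHom.id_apply, mulOmega_toAdd, shift_toAdd, shift_toAdd,
    mulOmega_toAdd, mul_assoc]

abbrev mOf (x : R2) : Multiplicative ((ℤ × ℤ) →₀ ℤ) := Multiplicative.ofAdd x.coeff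

lemma mulOmega_apply (ω : R2) (m : Multiplicative ((ℤ × ℤ) →₀ ℤ)) :
    mulOmega ω m = mOf (toR m.toAdd * ω) := rfl

lemma mul_mem_closure (ω : Multiplicative ((ℤ × ℤ) →₀ ℤ)) (x : R2) :
    SemidirectProduct.inl (φ := shiftAut (ℤ × ℤ)) (mOf (x * toR ω.toAdd)) ∈
      Subgroup.closure
        ({SemidirectProduct.inl ω} ∪
          Set.range (SemidirectProduct.inr : Multiplicative (ℤ × ℤ) →* ZW2)) := by
  set H := Subgroup.closure
        ({SemidirectProduct.inl ω} ∪
          Set.range (SemidirectProduct.inr : Multiplicative (ℤ × ℤ) →* ZW2)) with hH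
  induction x using AddMonoidAlgebra.induction_linear with
  | zero =>
      have : mOf ((0 : R2) * toR ω.toAdd) = 1 := by
        rw [zero_mul]; rfl
      rw [this, map_one]; exact one_mem H
  | add f g hf hg =>
      have : mOf ((f + g) * toR ω.toAdd)
          = mOf (f * toR ω.toAdd) * mOf (g * toR ω.toAdd) := by
        rw [add_mul]; rfl
      rw [this, map_mul]; exact mul_mem hf hg
  | single a b =>
      have h1 : (AddMonoidAlgebra.single a b : R2) = b • AddMonoidAlgebra.single a (1 : ℤ) := by
        rw [AddMonoidAlgebra.smul_single', mul_one]
      have h2 : mOf (AddMonoidAlgebra.single a b * toR ω.toAdd)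
          = mOf (AddMonoidAlgebra.single a 1 * toR ω.toAdd) ^ b := by
        rw [h1, smul_mul_assoc, ← ofAdd_zsmul]; rfl
      rw [h2, map_zpow]
      refine zpow_mem ?_ b
      have h3 : mOf (AddMonoidAlgebra.single a 1 * toR ω.toAdd)
          = shiftAut (ℤ × ℤ) (Multiplicative.ofAdd a) ω := by
        refine Multiplicative.toAdd.injective (AddMonoidAlgebra.ofCoeff_injective ?_)
        show toR _ = toR _
        rw [shift_toAdd]
        rfl
      rw [h3, SemidirectProduct.inl_aut]
      have hinr : ∀ g : Multiplicative (ℤ × ℤ), SemidirectProduct.inr (φ := shiftAut (ℤ × ℤ)) g ∈ H :=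
        fun g => Subgroup.subset_closure (Or.inr ⟨g, rfl⟩)
      have hinl : SemidirectProduct.inl (φ := shiftAut (ℤ × ℤ)) ω ∈ H :=
        Subgroup.subset_closure (Or.inl rfl)
      exact mul_mem (mul_mem (hinr _) hinl) (inv_mem (hinr _))

/-- In `ℤ ≀ ℤ²`, for any nontrivial element `ω` of the base group, the subgroup
generated by `ω` together with the top group `ℤ²` is isomorphic to `ℤ ≀ ℤ²`. -/
theorem base_element_with_top_generates_ZW2
    (ω : Multiplicative ((ℤ × ℤ) →₀ ℤ)) (hω : ω ≠ 1) :
    Nonempty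
      ((Subgroup.closure
          ({SemidirectProduct.inl ω} ∪
            Set.range (SemidirectProduct.inr :
              Multiplicative (ℤ × ℤ) →* ZW2)) : Subgroup ZW2)
        ≃* ZW2) := by
  have hω0 : toR ω.toAdd ≠ 0 := by
    intro h
    exact hω (Multiplicative.toAdd.injective (congrArg AddMonoidAlgebra.coeff h))
  set ωR : R2 := toR ω.toAdd with hωR
  set H : Subgroup ZW2 := Subgroup.closure
          ({SemidirectProduct.inl ω} ∪
            Set.range (SemidirectProduct.inr :
              Multiplicative (ℤ × ℤ) →* ZW2)) with hH
  let ψ : ZW2 →* ZW2 :=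
    SemidirectProduct.map (mulOmega ωR) (MonoidHom.id _) (compat ωR)
  have hinj : Function.Injective ψ := by
    intro x y h
    have h1 : mulOmega ωR x.left = mulOmega ωR y.left := congrArg SemidirectProduct.left h
    have h2 : x.right = y.right := by
      have := congrArg SemidirectProduct.right h
      simpa [ψ] using this
    have h3 : toR x.left.toAdd * ωR = toR y.left.toAdd * ωR := by
      rw [← mulOmega_toAdd, ← mulOmega_toAdd, h1]
    have h4 : toR x.left.toAdd = toR y.left.toAdd := mul_left_injective₀ hω0 h3
    have h5 : x.left = y.left := Multiplicative.toAdd.injective (congrArg AddMonoidAlgebra.coeff h4)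
    ext : 1
    · exact h5
    · exact h2
  have hrange : ψ.range = H := by
    apply le_antisymm
    · rintro _ ⟨x, rfl⟩
      have hx : x = SemidirectProduct.inl x.left * SemidirectProduct.inr x.right := by
        rw [← SemidirectProduct.mk_eq_inl_mul_inr]
      rw [hx, map_mul, SemidirectProduct.map_inl, SemidirectProduct.map_inr,
        mulOmega_apply]
      exact mul_mem (mul_mem_closure ω _)
        (Subgroup.subset_closure (Or.inr ⟨_, rfl⟩))
    · rw [hH, Subgroup.closure_le]
      rintro z (rfl | ⟨g, rfl⟩)
      · refine ⟨SemidirectProduct.inl (mOf 1), ?_⟩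
        rw [SemidirectProduct.map_inl]
        congr 1
        refine Multiplicative.toAdd.injective (AddMonoidAlgebra.ofCoeff_injective ?_)
        show toR _ = toR _
        rw [mulOmega_toAdd]
        exact one_mul ωR
      · exact ⟨SemidirectProduct.inr g, by rw [SemidirectProduct.map_inr]; rfl⟩
  exact ⟨(MulEquiv.subgroupCongr hrange.symm).trans (MonoidHom.ofInjective hinj).symm⟩
end
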